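/- Let g be a real Lie algebra with an abelian complex structure J and a J-invariant pluriclosed inner product. Suppose the J-invariant ideal g¹_J = [g,g] + J[g,g] is 2-step nilpotent. Then g itself is 2-step nilpotent, i.e. [[g,g],g] = 0. -/
import Mathlib

namespace TwoStepAux

/-- The real bilinear map corresponding (up to a factor) to the `(1,0)`-component
of the bracket of a `(1,0)` and a `(0,1)` vector. -/
def Al {L : Type*} [LieRing L] [LieAlgebra ℝ L] (J : L →ₗ[ℝ] L) (x y : L) : L :=
  ⁅x, y⁆ + J ⁅x, J y⁆

end TwoStepAux

open TwoStepAux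

/-- If the ideal `g¹_J = [g,g] + J[g,g]` is 2-step nilpotent, then a
Lie algebra with an abelian complex structure and a J-invariant pluriclosed inner
product is itself 2-step nilpotent. -/
theorem two_step_of_gJ_two_step
    {L : Type*} [LieRing L] [LieAlgebra ℝ L] [FiniteDimensional ℝ L]
    (J : L →ₗ[ℝ] L)
    (hJ2 : ∀ x : L, J (J x) = -x)
    (hint : ∀ x y : L, J ⁅x, y⁆ - ⁅J x, y⁆ - ⁅x, J y⁆ - J ⁅J x, J y⁆ = 0)
    (hab : ∀ x y : L, ⁅J x, J y⁆ = ⁅x, y⁆)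
    (g : L →ₗ[ℝ] L →ₗ[ℝ] ℝ)
    (hsymm : ∀ x y : L, g x y = g y x)
    (hpos : ∀ x : L, x ≠ 0 → 0 < g x x)
    (hJinv : ∀ x y : L, g (J x) (J y) = g x y)
    (hpc : ∀ x y z w : L, g ⁅y, z⁆ ⁅w, x⁆ - g ⁅x, z⁆ ⁅w, y⁆ + g ⁅x, y⁆ ⁅w, z⁆ = 0)
    (S : Submodule ℝ L)
    (hS : S = Submodule.span ℝ {z : L | ∃ x y : L, z = ⁅x, y⁆ ∨ z = J ⁅x, y⁆})
    (h2S : ∀ a ∈ S, ∀ b ∈ S, ∀ c ∈ S, ⁅⁅a, b⁆, c⁆ = (0 : L)) :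
    ∀ x y z : L, ⁅⁅x, y⁆, z⁆ = 0 := by
  subst hS
  -- injectivity of J
  have Jinj : ∀ v : L, J v = 0 → v = 0 := by
    intro v h
    have h2 := hJ2 v
    rw [h, map_zero] at h2
    exact neg_eq_zero.mp h2.symm
  -- skew symmetry in convenient form
  have hskew : ∀ x y : L, ⁅x, y⁆ = -⁅y, x⁆ := fun x y => (lie_skew x y).symm
  -- ρ : ⁅J x, y⁆ = -⁅x, J y⁆
  have hρ : ∀ x y : L, ⁅J x, y⁆ = -⁅x, J y⁆ := by
    intro x y
    have h := hint x y
    rw [hab] at h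
    have h2 : ⁅J x, y⁆ + ⁅x, J y⁆ =
        -(J ⁅x, y⁆ - ⁅J x, y⁆ - ⁅x, J y⁆ - J ⁅x, y⁆) := by abel
    rw [h, neg_zero] at h2
    rw [eq_neg_iff_add_eq_zero]
    exact h2
  -- Φ symmetry : ⁅x, J y⁆ = ⁅y, J x⁆
  have hΦ : ∀ x y : L, ⁅x, J y⁆ = ⁅y, J x⁆ := by
    intro x y
    rw [hskew x (J y), hρ y x, neg_neg]
  -- basic linearity facts for Al J
  have A_def : ∀ x y : L, Al J x y = ⁅x, y⁆ + J ⁅x, J y⁆ := fun _ _ => rfl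
  have A_addl : ∀ x y z : L, Al J (x + y) z = Al J x z + Al J y z := by
    intro x y z
    simp only [Al, add_lie, map_add]
    abel
  have A_addr : ∀ x y z : L, Al J x (y + z) = Al J x y + Al J x z := by
    intro x y z
    simp only [Al, lie_add, map_add]
    abel
  have A_negl : ∀ x y : L, Al J (-x) y = -Al J x y := by
    intro x y
    simp only [Al, neg_lie, map_neg]
    abel
  have A_negr : ∀ x y : L, Al J x (-y) = -Al J x y := by
    intro x y
    simp only [Al, lie_neg, map_neg]
    abel
  -- J-rules
  have A_Jleft : ∀ x y : L, Al J (J x) y = J (Al J x y) := by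
    intro x y
    simp only [Al, map_add, hρ x y, hab x y, hJ2]
    abel
  have A_Jright : ∀ x y : L, Al J x (J y) = -J (Al J x y) := by
    intro x y
    simp only [Al, map_add, hJ2, lie_neg, map_neg]
    abel
  -- swap rule : Al J x y - Al J y x = ⁅x,y⁆ + ⁅x,y⁆
  have A_swap : ∀ x y : L, Al J x y - Al J y x = ⁅x, y⁆ + ⁅x, y⁆ := by
    intro x y
    simp only [Al]
    rw [← hΦ x y, hskew y x]
    abel
  -- Jacobi in the form [[u,w],z] - [[u,z],w] = [u,[w,z]]
  have j1 : ∀ u w z : L, ⁅⁅u, w⁆, z⁆ - ⁅⁅u, z⁆, w⁆ = ⁅u, ⁅w, z⁆⁆ := by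
    intro u w z
    rw [leibniz_lie u w z, ← lie_skew ⁅u, z⁆ w]
    abel
  -- L5 : ⁅Al J u w, z⁆ = ⁅Al J u z, w⁆
  have L5 : ∀ u w z : L, ⁅Al J u w, z⁆ = ⁅Al J u z, w⁆ := by
    intro u w z
    simp only [Al, add_lie]
    rw [hρ ⁅u, J w⁆ z, hρ ⁅u, J z⁆ w]
    have e1 := j1 u w z
    have e2 := j1 u (J w) (J z)
    rw [hab w z] at e2
    have e3 : ⁅⁅u, w⁆, z⁆ = ⁅u, ⁅w, z⁆⁆ + ⁅⁅u, z⁆, w⁆ := by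
      rw [← e1]; abel
    have e4 : ⁅⁅u, J w⁆, J z⁆ = ⁅u, ⁅w, z⁆⁆ + ⁅⁅u, J z⁆, J w⁆ := by
      rw [← e2]; abel
    rw [e3, e4]
    abel
  -- L4 : Al J x (Al J u w) = Al J w (Al J u x)
  have L4 : ∀ x u w : L, Al J x (Al J u w) = Al J w (Al J u x) := by
    intro x u w
    have h1 : ⁅x, Al J u w⁆ = ⁅w, Al J u x⁆ := by
      rw [hskew x (Al J u w), L5 u w x]
      exact lie_skew w (Al J u x)
    have h2 : ⁅x, J (Al J u w)⁆ = ⁅w, J (Al J u x)⁆ := by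
      rw [← A_Jleft u w, ← A_Jleft u x]
      rw [hskew x (Al J (J u) w), L5 (J u) w x]
      exact lie_skew w (Al J (J u) x)
    show ⁅x, Al J u w⁆ + J ⁅x, J (Al J u w)⁆ = ⁅w, Al J u x⁆ + J ⁅w, J (Al J u x)⁆
    rw [h1, h2]
  -- L6 : Al J (Al J u w) z = Al J (Al J u z) w
  have L6 : ∀ u w z : L, Al J (Al J u w) z = Al J (Al J u z) w := by
    intro u w z
    have s1 : Al J (Al J u w) z = Al J z (Al J u w) + (⁅Al J u w, z⁆ + ⁅Al J u w, z⁆) := by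
      have := A_swap (Al J u w) z
      rw [← this]; abel
    have s2 : Al J w (Al J u z) =
        Al J (Al J u z) w + (⁅w, Al J u z⁆ + ⁅w, Al J u z⁆) := by
      have := A_swap w (Al J u z)
      rw [show (⁅w, Al J u z⁆ + ⁅w, Al J u z⁆ : L) = Al J w (Al J u z) - Al J (Al J u z) w
        from this.symm]
      abel
    rw [s1, L4 z u w, L5 u w z, s2, hskew (Al J u z) w]
    abel
  -- membership facts
  set Sp := Submodule.span ℝ {z : L | ∃ x y : L, z = ⁅x, y⁆ ∨ z = J ⁅x, y⁆} with hSp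
  have hbr : ∀ x y : L, ⁅x, y⁆ ∈ Sp := by
    intro x y
    exact Submodule.subset_span ⟨x, y, Or.inl rfl⟩
  have hJbr : ∀ x y : L, J ⁅x, y⁆ ∈ Sp := by
    intro x y
    exact Submodule.subset_span ⟨x, y, Or.inr rfl⟩
  have hSJ : ∀ s : L, s ∈ Sp → J s ∈ Sp := by
    intro s hs
    induction hs using Submodule.span_induction with
    | mem x hx =>
      obtain ⟨a, b, hx | hx⟩ := hx
      · rw [hx]; exact hJbr a b
      · rw [hx, hJ2]; exact Sp.neg_mem (hbr a b)
    | zero => rw [map_zero]; exact Sp.zero_mem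
    | add x y _ _ hx hy => rw [map_add]; exact Sp.add_mem hx hy
    | smul a x _ hx => rw [map_smul]; exact Sp.smul_mem a hx
  have hAS : ∀ x y : L, Al J x y ∈ Sp := by
    intro x y
    exact Sp.add_mem (hbr x y) (hJbr x (J y))
  -- L9 : Al J (Al J a b) c = 0 for a b c ∈ Sp
  have L9 : ∀ a b c : L, a ∈ Sp → b ∈ Sp → c ∈ Sp → Al J (Al J a b) c = 0 := by
    intro a b c ha hb hc
    have h1 : ⁅Al J a b, c⁆ = 0 := by
      show ⁅⁅a, b⁆ + J ⁅a, J b⁆, c⁆ = 0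
      rw [add_lie, hρ ⁅a, J b⁆ c, h2S a ha b hb c hc,
        h2S a ha (J b) (hSJ b hb) (J c) (hSJ c hc)]
      simp
    have h2 : ⁅Al J a b, J c⁆ = 0 := by
      show ⁅⁅a, b⁆ + J ⁅a, J b⁆, J c⁆ = 0
      rw [add_lie, hab ⁅a, J b⁆ c, h2S a ha b hb (J c) (hSJ c hc),
        h2S a ha (J b) (hSJ b hb) c hc]
      simp
    show ⁅Al J a b, c⁆ + J ⁅Al J a b, J c⁆ = 0
    rw [h1, h2, map_zero, add_zero]
  -- positivity facts
  have gnonneg : ∀ v : L, 0 ≤ g v v := by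
    intro v
    rcases eq_or_ne v 0 with h | h
    · simp [h]
    · exact le_of_lt (hpos v h)
  have gzero : ∀ v : L, g v v = 0 → v = 0 := by
    intro v h
    by_contra hne
    exact absurd h (ne_of_gt (hpos v hne))
  -- L3 : pluriclosed sum-of-squares identity
  have L3 : ∀ a z : L,
      g ⁅a, z⁆ ⁅a, z⁆ + g ⁅J a, z⁆ ⁅J a, z⁆ + g ⁅z, J z⁆ ⁅J a, a⁆ = 0 := by
    intro a z
    have h := hpc a z (J z) (J a)
    have e : ⁅a, J z⁆ = -⁅J a, z⁆ := by rw [hρ a z, neg_neg]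
    rw [e, hab a z] at h
    simp only [map_neg, LinearMap.neg_apply] at h
    linarith
  -- PC2 : |Al a b|² + |Al b a|² = 2 g(Al a a, Al b b)
  have PC2 : ∀ a b : L,
      g (Al J a b) (Al J a b) + g (Al J b a) (Al J b a)
        = 2 * g (Al J a a) (Al J b b) := by
    intro a b
    have hba : Al J b a = -⁅a, b⁆ + J ⁅a, J b⁆ := by
      show ⁅b, a⁆ + J ⁅b, J a⁆ = -⁅a, b⁆ + J ⁅a, J b⁆
      rw [hskew b a, ← hΦ a b]
    have haa : Al J a a = J ⁅a, J a⁆ := by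
      show ⁅a, a⁆ + J ⁅a, J a⁆ = J ⁅a, J a⁆
      rw [lie_self, zero_add]
    have hbb : Al J b b = J ⁅b, J b⁆ := by
      show ⁅b, b⁆ + J ⁅b, J b⁆ = J ⁅b, J b⁆
      rw [lie_self, zero_add]
    have hL3 := L3 b a
    have e1 : ⁅b, a⁆ = -⁅a, b⁆ := hskew b a
    have e2 : ⁅J b, a⁆ = -⁅a, J b⁆ := by rw [hρ b a, ← hΦ a b]
    have e3 : ⁅a, J a⁆ = -⁅J a, a⁆ := by rw [hρ a a, neg_neg]
    rw [e1, e2] at hL3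
    simp only [map_neg, LinearMap.neg_apply, neg_neg] at hL3
    -- hL3 : g ⁅a,b⁆ ⁅a,b⁆ + g ⁅a,Jb⁆ ⁅a,Jb⁆ + g ⁅a,Ja⁆ ⁅Jb,b⁆ = 0
    have e4 : ⁅J b, b⁆ = -⁅b, J b⁆ := hρ b b
    rw [e4] at hL3
    simp only [map_neg, LinearMap.neg_apply] at hL3
    have key : g ⁅a, J a⁆ ⁅b, J b⁆ = g ⁅a, b⁆ ⁅a, b⁆ + g ⁅a, J b⁆ ⁅a, J b⁆ := by
      linarith
    rw [A_def a b, hba, haa, hbb, hJinv]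
    simp only [map_add, map_neg, LinearMap.add_apply, LinearMap.neg_apply,
      hJinv]
    linarith
  -- halving lemma
  have half : ∀ v : L, v + v = 0 → v = 0 := by
    intro v h
    have h2 : (2 : ℝ) • v = 0 := by rw [two_smul]; exact h
    rcases smul_eq_zero.mp h2 with h3 | h3
    · norm_num at h3
    · exact h3
  -- KEY1 : Al (Al p p) (Al z z) = 0
  have KEY1 : ∀ p z : L, Al J (Al J p p) (Al J z z) = 0 := by
    intro p z
    set rz := Al J z z with hrz
    set s := Al J p rz with hs2
    have hps : Al J p s = Al J rz (Al J p p) := L4 p p rz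
    have hsp : Al J s p = Al J (Al J p p) rz := L6 p rz p
    have hss : Al J s s = 0 := by
      have h1 : Al J s s = Al J (Al J p s) rz := L6 p rz s
      rw [hps] at h1
      rw [h1]
      exact L9 rz (Al J p p) rz (hAS z z) (hAS p p) (hAS z z)
    have hP := PC2 p s
    rw [hss] at hP
    rw [show g (Al J p p) (0 : L) = 0 from map_zero (g (Al J p p))] at hP
    have h1 : g (Al J p s) (Al J p s) = 0 := by
      have := gnonneg (Al J p s)
      have := gnonneg (Al J s p)
      linarith
    have h2 : g (Al J s p) (Al J s p) = 0 := by
      have := gnonneg (Al J p s)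
      have := gnonneg (Al J s p)
      linarith
    have := gzero _ h2
    rw [hsp] at this
    exact this
  -- Step A: depolarize the second slot
  have StepA : ∀ p u w : L, Al J (Al J p p) (Al J u w) = 0 := by
    intro p u w
    set ξ := Al J p p with hξ
    have H : ∀ d : L, Al J ξ (Al J d d) = 0 := fun d => KEY1 p d
    have hpair : ∀ u w : L, Al J ξ (Al J u w) + Al J ξ (Al J w u) = 0 := by
      intro u w
      have hd := H (u + w)
      have expand : Al J (u + w) (u + w)
          = Al J u u + (Al J u w + Al J w u) + Al J w w := by
        rw [A_addl, A_addr, A_addr]; abel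
      rw [expand, A_addr, A_addr, H u, H w, A_addr] at hd
      rw [zero_add, add_zero] at hd
      exact hd
    have hbr0 : ∀ u w : L, Al J ξ ⁅u, w⁆ = 0 := by
      intro u w
      have h2 := hpair u (J w)
      rw [A_Jright u w, A_Jleft w u, A_negr] at h2
      -- h2 : -Al ξ (J (Al u w)) + Al ξ (J (Al w u)) = 0
      have hswapJ : J (Al J w u) = J (Al J u w) + J (-(⁅u, w⁆ + ⁅u, w⁆)) := by
        rw [← map_add]
        congr 1
        have := A_swap u w
        rw [show Al J w u = Al J u w - (⁅u, w⁆ + ⁅u, w⁆) from by rw [← this]; abel]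
        abel
      rw [hswapJ, A_addr] at h2
      have h3 : Al J ξ (J (-(⁅u, w⁆ + ⁅u, w⁆))) = 0 := by
        have : -Al J ξ (J (Al J u w)) +
            (Al J ξ (J (Al J u w)) + Al J ξ (J (-(⁅u, w⁆ + ⁅u, w⁆)))) =
            Al J ξ (J (-(⁅u, w⁆ + ⁅u, w⁆))) := by abel
        rw [← this]
        exact h2
      rw [map_neg, map_add, A_negr, A_addr] at h3
      have h4 : Al J ξ (J ⁅u, w⁆) + Al J ξ (J ⁅u, w⁆) = 0 := by
        have h5 : -(Al J ξ (J ⁅u, w⁆) + Al J ξ (J ⁅u, w⁆)) = 0 := h3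
        rw [← neg_zero, ← h5]; abel
      have h6 := half _ h4
      rw [A_Jright] at h6
      have h7 : J (Al J ξ ⁅u, w⁆) = 0 := by
        rw [← neg_zero, ← h6]; abel
      exact Jinj _ h7
    have hdiff : Al J ξ (Al J u w) - Al J ξ (Al J w u) = 0 := by
      have hsw : Al J u w = Al J w u + (⁅u, w⁆ + ⁅u, w⁆) := by
        have := A_swap u w
        rw [← this]; abel
      rw [hsw, A_addr, A_addr, hbr0 u w]
      abel
    have hp := hpair u w
    have : Al J ξ (Al J u w) + Al J ξ (Al J u w) = 0 := by
      have e : Al J ξ (Al J u w) + Al J ξ (Al J u w)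
          = (Al J ξ (Al J u w) + Al J ξ (Al J w u))
            + (Al J ξ (Al J u w) - Al J ξ (Al J w u)) := by abel
      rw [e, hp, hdiff, add_zero]
    exact half _ this
  -- Step B: depolarize the first slot; also get bracket versions
  have X1 : ∀ a b c d : L, Al J ⁅a, b⁆ (Al J c d) = 0 := by
    intro a b c d
    set η := Al J c d with hη
    have K : ∀ q : L, Al J (Al J q q) η = 0 := fun q => StepA q c d
    have hpairL : ∀ u w : L, Al J (Al J u w) η + Al J (Al J w u) η = 0 := by
      intro u w
      have hd := K (u + w)
      have expand : Al J (u + w) (u + w)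
          = Al J u u + (Al J u w + Al J w u) + Al J w w := by
        rw [A_addl, A_addr, A_addr]; abel
      rw [expand, A_addl, A_addl, K u, K w, A_addl] at hd
      rw [zero_add, add_zero] at hd
      exact hd
    -- bracket version
    have h2 := hpairL a (J b)
    rw [A_Jright a b, A_Jleft b a, A_negl] at h2
    have hswapJ : J (Al J b a) = J (Al J a b) + J (-(⁅a, b⁆ + ⁅a, b⁆)) := by
      rw [← map_add]
      congr 1
      have := A_swap a b
      rw [show Al J b a = Al J a b - (⁅a, b⁆ + ⁅a, b⁆) from by rw [← this]; abel]
      abel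
    rw [hswapJ, A_addl] at h2
    have h3 : Al J (J (-(⁅a, b⁆ + ⁅a, b⁆))) η = 0 := by
      have e : -Al J (J (Al J a b)) η +
          (Al J (J (Al J a b)) η + Al J (J (-(⁅a, b⁆ + ⁅a, b⁆))) η) =
          Al J (J (-(⁅a, b⁆ + ⁅a, b⁆))) η := by abel
      rw [← e]
      exact h2
    rw [map_neg, map_add, A_negl, A_addl] at h3
    have h4 : Al J (J ⁅a, b⁆) η + Al J (J ⁅a, b⁆) η = 0 := by
      have h5 : -(Al J (J ⁅a, b⁆) η + Al J (J ⁅a, b⁆) η) = 0 := h3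
      rw [← neg_zero, ← h5]; abel
    have h6 := half _ h4
    rw [A_Jleft] at h6
    exact Jinj _ h6
  -- X2 : Al ⁅a,b⁆ ⁅c,d⁆ = 0
  have X2 : ∀ a b c d : L, Al J ⁅a, b⁆ ⁅c, d⁆ = 0 := by
    intro a b c d
    have hsw : Al J c d = Al J d c + (⁅c, d⁆ + ⁅c, d⁆) := by
      have := A_swap c d
      rw [← this]; abel
    have h1 := X1 a b c d
    have h2 := X1 a b d c
    rw [hsw, A_addr, h2, zero_add, A_addr] at h1
    exact half _ h1
  -- conclusion
  intro x y z
  set m := ⁅x, y⁆ with hm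
  have hAm : Al J m m = 0 := X2 x y x y
  have hmJm : ⁅m, J m⁆ = 0 := by
    have h1 : J ⁅m, J m⁆ = 0 := by
      have : (⁅m, m⁆ : L) + J ⁅m, J m⁆ = 0 := hAm
      rw [lie_self, zero_add] at this
      exact this
    exact Jinj _ h1
  have hJmm : ⁅J m, m⁆ = 0 := by rw [hρ m m, hmJm, neg_zero]
  have h := L3 m z
  rw [hJmm] at h
  rw [show g ⁅z, J z⁆ (0 : L) = 0 from map_zero (g ⁅z, J z⁆)] at h
  have h1 : g ⁅m, z⁆ ⁅m, z⁆ = 0 := by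
    have := gnonneg ⁅m, z⁆
    have := gnonneg ⁅J m, z⁆
    linarith
  exact gzero _ h1
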